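/- For each real λ, the maps t ↦ R(√λ·α)·t (acting on the vector (√λ t, w) when λ>0, interpreted via power series of sin and cos in general) and x ↦ R(φ)x + t v + w a, for parameters φ, α ∈ ℝ and v, a ∈ ℝ², preserve the hypersurface H_λ = {(t,x,y,w) ∈ ℝ⁴ : w² + λ t² = 1} and the Euclidean form dx²+dy² on the spatial plane. -/

import Mathlib

/-- `cos(√λ α)`, defined by its power series in `λ` (real for all real `λ`):
`cosh(√(-λ) α)` for `λ < 0`. -/
noncomputable def cosl (lam α : ℝ) : ℝ :=
  if 0 ≤ lam then Real.cos (Real.sqrt lam * α) else Real.cosh (Real.sqrt (-lam) * α)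

/-- `sin(√λ α)/√λ`, defined by its power series in `λ` (real for all real `λ`):
`α` for `λ = 0` and `sinh(√(-λ) α)/√(-λ)` for `λ < 0`. -/
noncomputable def sinl (lam α : ℝ) : ℝ :=
  if lam = 0 then α
  else if 0 < lam then Real.sin (Real.sqrt lam * α) / Real.sqrt lam
  else Real.sinh (Real.sqrt (-lam) * α) / Real.sqrt (-lam)

/-- Rotation of the plane by angle `φ`. -/
noncomputable def rot (φ : ℝ) (w : ℝ × ℝ) : ℝ × ℝ :=
  (Real.cos φ * w.1 + Real.sin φ * w.2, -Real.sin φ * w.1 + Real.cos φ * w.2)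

/-- the Newton-Hooke transformations, given on the time sector by
the `R(√λ α)`-rotation of `(θt, w)` (interpreted via power series, i.e.
`t ↦ cosl λ α · t + sinl λ α · w`, `w ↦ -λ · sinl λ α · t + cosl λ α · w`) and
on the spatial sector by `x ↦ R(φ)x + t v + w a`, preserve the hypersurface
`H_λ = {w² + λ t² = 1}`, and the spatial map is an affine isometry of the
Euclidean plane for each fixed `(t, w)`. -/
theorem newton_hooke_transformations_preserve_structure
    (lam φ α : ℝ) (v a : ℝ × ℝ) (t w : ℝ) (hH : w ^ 2 + lam * t ^ 2 = 1) :
    ((-lam * sinl lam α * t + cosl lam α * w) ^ 2 +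
        lam * (cosl lam α * t + sinl lam α * w) ^ 2 = 1) ∧
    (∀ x₁ x₂ : ℝ × ℝ,
      let f : ℝ × ℝ → ℝ × ℝ := fun x => rot φ x + t • v + w • a
      (f x₁ - f x₂).1 ^ 2 + (f x₁ - f x₂).2 ^ 2 =
        (x₁ - x₂).1 ^ 2 + (x₁ - x₂).2 ^ 2) := by
  have key : cosl lam α ^ 2 + lam * sinl lam α ^ 2 = 1 := by
    rcases lt_trichotomy lam 0 with h | h | h
    · have h1 : ¬ (0 ≤ lam) := not_le.mpr h
      have h2 : lam ≠ 0 := ne_of_lt h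
      have h3 : ¬ (0 < lam) := not_lt.mpr h.le
      have hpos : (0:ℝ) < -lam := by linarith
      have hs : Real.sqrt (-lam) ^ 2 = -lam := Real.sq_sqrt hpos.le
      have hne : Real.sqrt (-lam) ≠ 0 := by positivity
      simp only [cosl, sinl, h1, h2, h3, if_false, if_true]
      have := Real.cosh_sq_sub_sinh_sq (Real.sqrt (-lam) * α)
      field_simp
      nlinarith [this]
    · subst h
      simp [cosl, sinl, Real.sqrt_zero]
    · have h1 : (0:ℝ) ≤ lam := h.le
      have h2 : lam ≠ 0 := ne_of_gt h
      have hs : Real.sqrt lam ^ 2 = lam := Real.sq_sqrt h1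
      have hne : Real.sqrt lam ≠ 0 := by positivity
      simp only [cosl, sinl, h1, h2, h, if_true, if_false]
      have := Real.sin_sq_add_cos_sq (Real.sqrt lam * α)
      field_simp
      linear_combination lam * this + (Real.cos (Real.sqrt lam * α) ^ 2 - 1) * hs
  constructor
  · nlinarith [key, hH]
  · intro x₁ x₂ f
    have hpyth := Real.sin_sq_add_cos_sq φ
    simp only [f, rot, Prod.mk_add_mk, Prod.mk_sub_mk, Prod.fst_add, Prod.snd_add,
      Prod.fst_sub, Prod.snd_sub, Prod.smul_fst, Prod.smul_snd, smul_eq_mul]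
    linear_combination ((x₁.1 - x₂.1)^2 + (x₁.2 - x₂.2)^2) * hpyth
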